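/- For every positive integer n and integer t, ∑_{k=0}^{⌊n/2⌋} (-1)^{n-k}·(n/(n-k))·C(n-k, k)·L_{n-2k+t} equals 2·L_t if n ≡ 0 (mod 5); equals -L_{t+1} if n ≡ 1 or 4 (mod 5); and equals L_{t-1} if n ≡ 2 or 3 (mod 5). -/

import Mathlib

open Finset Real

/-- Fibonacci numbers extended to integer indices. -/
def fibZ (n : ℤ) : ℤ :=
  if 0 ≤ n then (Nat.fib n.toNat : ℤ)
  else (-1) ^ ((-n).toNat + 1) * (Nat.fib (-n).toNat : ℤ)

/-- Lucas numbers on natural indices. -/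
def lucasNat : ℕ → ℤ
  | 0 => 2
  | 1 => 1
  | n + 2 => lucasNat (n + 1) + lucasNat n

/-- Lucas numbers extended to integer indices. -/
def lucasZ (n : ℤ) : ℤ :=
  if 0 ≤ n then lucasNat n.toNat
  else (-1) ^ (-n).toNat * lucasNat (-n).toNat

noncomputable def gold : ℝ := (1 + Real.sqrt 5) / 2
noncomputable def gold' : ℝ := (1 - Real.sqrt 5) / 2


open Nat

lemma sqrt5_sq : Real.sqrt 5 ^ 2 = 5 := Real.sq_sqrt (by norm_num)

lemma goldSq : gold ^ 2 = gold + 1 := by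
  unfold gold; linear_combination sqrt5_sq / 4

lemma goldSq' : gold' ^ 2 = gold' + 1 := by
  unfold gold'; linear_combination sqrt5_sq / 4

lemma goldMul : gold * gold' = -1 := by
  unfold gold gold'; linear_combination -sqrt5_sq / 4

lemma goldPos : 0 < gold := by
  unfold gold; positivity

lemma goldNe : gold ≠ 0 := ne_of_gt goldPos

lemma goldNe' : gold' ≠ 0 := by
  intro h
  have := goldMul
  rw [h, mul_zero] at this
  norm_num at this

lemma lucasNat_real (n : ℕ) : (lucasNat n : ℝ) = gold ^ n + gold' ^ n := by
  induction n using Nat.strong_induction_on with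
  | _ n ih =>
    match n with
    | 0 => rw [show lucasNat 0 = 2 from rfl]; norm_num
    | 1 => rw [show lucasNat 1 = 1 from rfl]; push_cast; rw [pow_one, pow_one]; unfold gold gold'; norm_num
    | (m+2) =>
      have h1 := ih (m+1) (by omega)
      have h0 := ih m (by omega)
      show ((lucasNat (m+1) + lucasNat m : ℤ) : ℝ) = _
      push_cast
      rw [h1, h0]
      have hg : gold ^ (m+2) = gold ^ (m+1) + gold ^ m := by
        have : gold ^ (m+2) = gold ^ m * gold ^ 2 := by ring
        rw [this, goldSq]; ring
      have hg' : gold' ^ (m+2) = gold' ^ (m+1) + gold' ^ m := by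
        have : gold' ^ (m+2) = gold' ^ m * gold' ^ 2 := by ring
        rw [this, goldSq']; ring
      rw [hg, hg']; ring

lemma lucasZ_real (m : ℤ) : (lucasZ m : ℝ) = gold ^ m + gold' ^ m := by
  rcases le_or_gt 0 m with h | h
  · lift m to ℕ using h
    rw [lucasZ]
    simp [lucasNat_real, zpow_natCast]
  · set n : ℕ := (-m).toNat with hn
    have hm : m = -(n : ℤ) := by simp [hn]; omega
    have hn1 : 1 ≤ n := by omega
    rw [lucasZ, if_neg (by omega)]
    have hinv : (gold ^ (n:ℤ))⁻¹ = (-1) ^ n * gold' ^ n := by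
      apply inv_eq_of_mul_eq_one_right
      rw [zpow_natCast]
      have : gold ^ n * ((-1:ℝ) ^ n * gold' ^ n) = (gold * gold' * (-1)) ^ n := by ring
      rw [this, goldMul]; norm_num
    have hinv' : (gold' ^ (n:ℤ))⁻¹ = (-1) ^ n * gold ^ n := by
      apply inv_eq_of_mul_eq_one_right
      rw [zpow_natCast]
      have : gold' ^ n * ((-1:ℝ) ^ n * gold ^ n) = (gold * gold' * (-1)) ^ n := by ring
      rw [this, goldMul]; norm_num
    rw [hm, zpow_neg, zpow_neg, hinv, hinv']
    push_cast [lucasNat_real]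
    simp only [neg_neg, Int.toNat_natCast]
    ring

lemma lucasZ_add_two (m : ℤ) : lucasZ (m + 2) = lucasZ (m + 1) + lucasZ m := by
  have key : ∀ x : ℝ, x ≠ 0 → x ^ 2 = x + 1 → x ^ (m+2) = x ^ (m+1) + x ^ m := by
    intro x hx h2
    rw [zpow_add₀ hx m 2, zpow_add₀ hx m 1, zpow_one,
      show (2:ℤ) = ((2:ℕ):ℤ) from rfl, zpow_natCast]
    linear_combination x ^ m * h2
  have : ((lucasZ (m+2) : ℤ) : ℝ) = ((lucasZ (m+1) + lucasZ m : ℤ) : ℝ) := by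
    push_cast
    rw [lucasZ_real, lucasZ_real, lucasZ_real,
      key gold goldNe goldSq, key gold' goldNe' goldSq']
    ring
  exact_mod_cast this

noncomputable def cc (n k : ℕ) : ℝ :=
  (-1 : ℝ) ^ (n - k) * ((n : ℝ) / ((n : ℝ) - (k : ℝ))) * (Nat.choose (n - k) k : ℝ)

lemma ell (b j : ℕ) :
    ((b : ℝ) + 2*j + 3) / ((b:ℝ) + j + 2) * ((b+j+2).choose (j+1) : ℝ) =
      ((b : ℝ) + 2*j + 2) / ((b:ℝ) + j + 1) * ((b+j+1).choose (j+1) : ℝ) +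
      ((b : ℝ) + 2*j + 1) / ((b:ℝ) + j + 1) * ((b+j+1).choose j : ℝ) := by
  rw [Nat.cast_choose ℝ (show j+1 ≤ b+j+2 by omega),
      Nat.cast_choose ℝ (show j+1 ≤ b+j+1 by omega),
      Nat.cast_choose ℝ (show j ≤ b+j+1 by omega),
      show b+j+2 - (j+1) = b+1 by omega,
      show b+j+1 - (j+1) = b by omega,
      show b+j+1 - j = b+1 by omega,
      show (b+j+2)! = (b+j+2) * (b+j+1)! by rw [← Nat.factorial_succ],
      show (j+1)! = (j+1) * (j)! by rw [← Nat.factorial_succ],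
      show (b+1)! = (b+1) * (b)! by rw [← Nat.factorial_succ]]
  have h1 : ((b+j+1)! : ℝ) ≠ 0 := by positivity
  have h2 : ((j)! : ℝ) ≠ 0 := by positivity
  have h3 : ((b)! : ℝ) ≠ 0 := by positivity
  have h4 : ((b:ℝ) + j + 2) ≠ 0 := by positivity
  have h5 : ((b:ℝ) + j + 1) ≠ 0 := by positivity
  have h6 : ((j:ℝ) + 1) ≠ 0 := by positivity
  have h7 : ((b:ℝ) + 1) ≠ 0 := by positivity
  push_cast
  field_simp
  ring


lemma coeff_rec (n k : ℕ) (hn : 1 ≤ n) (hk1 : 1 ≤ k) (hk2 : k ≤ (n+2)/2) :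
    cc (n+2) k + cc (n+1) k + cc n (k-1) = 0 := by
  have hkn : k ≤ n := by omega
  have h2k : 2*k ≤ n + 2 := by omega
  obtain ⟨j, rfl⟩ : ∃ j, k = j + 1 := ⟨k-1, by omega⟩
  rcases (show 2*(j+1) ≤ n+1 ∨ n = 2*j by omega) with hA | hA
  · -- generic case
    obtain ⟨b, rfl⟩ : ∃ b, n = b + 2*j + 1 := ⟨n - 2*j - 1, by omega⟩
    unfold cc
    rw [show b+2*j+1+2-(j+1) = b+j+2 by omega,
        show b+2*j+1+1-(j+1) = b+j+1 by omega,
        show j+1-1 = j by omega,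
        show b+2*j+1-j = b+j+1 by omega]
    push_cast
    have e2 : (-1:ℝ)^(b+j+2) = (-1)^(b+j) := by ring
    have e1 : (-1:ℝ)^(b+j+1) = -(-1)^(b+j) := by ring
    rw [e2, e1]
    linear_combination ((-1:ℝ)^(b+j)) * ell b j
  · -- top case, n = 2j, j ≥ 1
    subst hA
    have hj : 1 ≤ j := by omega
    unfold cc
    rw [show 2*j+2-(j+1) = j+1 by omega,
        show 2*j+1-(j+1) = j by omega,
        show j+1-1 = j by omega,
        show 2*j-j = j by omega,
        Nat.choose_self, Nat.choose_self,
        Nat.choose_eq_zero_of_lt (by omega : j < j + 1)]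
    push_cast
    have e2 : (-1:ℝ)^(j+1) = -(-1)^j := by ring
    rw [e2]
    have hjr : (j:ℝ) ≠ 0 := by positivity
    have hjr1 : (j:ℝ) + 1 ≠ 0 := by positivity
    have hjr2 : (1:ℝ) + (j:ℝ) ≠ 0 := by positivity
    field_simp
    ring

noncomputable def gg (n : ℕ) (t : ℤ) : ℝ :=
  ∑ k ∈ Finset.range (n / 2 + 1), cc n k * (lucasZ ((n : ℤ) - 2 * k + t) : ℝ)

lemma grec (n : ℕ) (hn : 1 ≤ n) (t : ℤ) :
    gg (n+2) t = - gg (n+1) (t+1) - gg n t := by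
  have hA : gg (n+2) t
      = ∑ k ∈ Finset.range (n/2+2), cc (n+2) k * (lucasZ ((n:ℤ)+2-2*k+t) : ℝ) := by
    unfold gg
    rw [show (n+2)/2+1 = n/2+2 by omega]
    refine Finset.sum_congr rfl fun k _ => ?_
    congr 2 <;> (push_cast; try ring)
  have hB : gg (n+1) (t+1)
      = ∑ k ∈ Finset.range (n/2+2), cc (n+1) k * (lucasZ ((n:ℤ)+2-2*k+t) : ℝ) := by
    unfold gg
    rw [Finset.sum_congr rfl (fun (k : ℕ) _ =>
      (show cc (n+1) k * (lucasZ (((n+1:ℕ):ℤ) - 2*k + (t+1)) : ℝ)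
          = cc (n+1) k * (lucasZ ((n:ℤ)+2-2*k+t) : ℝ) by congr 2 <;> (push_cast; try ring)))]
    apply Finset.sum_subset (Finset.range_subset_range.mpr (show (n+1)/2+1 ≤ n/2+2 by omega))
    intro x hx hxn
    have hx1 : x < n/2+2 := Finset.mem_range.mp hx
    have hx2 : ¬ (x < (n+1)/2+1) := fun h => hxn (Finset.mem_range.mpr h)
    have : n+1-x < x := by omega
    simp [cc, Nat.choose_eq_zero_of_lt this]
  have hC : gg n t
      = ∑ k ∈ Finset.Ico 1 (n/2+2), cc n (k-1) * (lucasZ ((n:ℤ)+2-2*k+t) : ℝ) := by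
    rw [Finset.sum_Ico_eq_sum_range, show n/2+2-1 = n/2+1 by omega]
    unfold gg
    refine Finset.sum_congr rfl fun k _ => ?_
    rw [show 1+k-1 = k by omega]
    congr 2 <;> (push_cast; try ring)
  rw [hA, hB, hC]
  have hsum : (∑ k ∈ Finset.range (n/2+2), cc (n+2) k * (lucasZ ((n:ℤ)+2-2*k+t) : ℝ))
      + (∑ k ∈ Finset.range (n/2+2), cc (n+1) k * (lucasZ ((n:ℤ)+2-2*k+t) : ℝ))
      + (∑ k ∈ Finset.Ico 1 (n/2+2), cc n (k-1) * (lucasZ ((n:ℤ)+2-2*k+t) : ℝ)) = 0 := by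
    rw [← Finset.sum_add_distrib, Finset.range_eq_Ico,
        Finset.sum_eq_sum_Ico_succ_bot (show 0 < n/2+2 by omega), add_assoc,
        ← Finset.sum_add_distrib]
    have hz : ∀ k ∈ Finset.Ico 1 (n/2+2),
        (cc (n+2) k * (lucasZ ((n:ℤ)+2-2*k+t) : ℝ)
          + cc (n+1) k * (lucasZ ((n:ℤ)+2-2*k+t) : ℝ))
          + cc n (k-1) * (lucasZ ((n:ℤ)+2-2*k+t) : ℝ) = 0 := by
      intro k hk
      obtain ⟨hk1, hk2⟩ := Finset.mem_Ico.mp hk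
      have h := coeff_rec n k hn hk1 (by omega)
      linear_combination (lucasZ ((n:ℤ)+2-2*k+t) : ℝ) * h
    rw [Finset.sum_congr rfl hz, Finset.sum_const_zero, add_zero]
    -- remaining : k = 0 term
    have c2 : cc (n+2) 0 = (-1:ℝ)^n := by
      simp only [cc, Nat.sub_zero, Nat.choose_zero_right, Nat.cast_one, mul_one, Nat.cast_zero,
        sub_zero, Nat.cast_add, Nat.cast_ofNat]
      rw [div_self (show ((n:ℝ)+2) ≠ 0 by positivity), mul_one, pow_add]
      norm_num
    have c1 : cc (n+1) 0 = -(-1:ℝ)^n := by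
      simp only [cc, Nat.sub_zero, Nat.choose_zero_right, Nat.cast_one, mul_one, Nat.cast_zero,
        sub_zero, Nat.cast_add]
      rw [div_self (show ((n:ℝ)+1) ≠ 0 by positivity), mul_one, pow_succ]
      norm_num
    rw [c2, c1]
    push_cast
    ring
  linarith [hsum]

noncomputable def rhsF (n : ℕ) (t : ℤ) : ℝ :=
  if n % 5 = 0 then 2 * (lucasZ t : ℝ)
  else if n % 5 = 1 ∨ n % 5 = 4 then -(lucasZ (t + 1) : ℝ)
  else (lucasZ (t - 1) : ℝ)

lemma lucasR1 (t : ℤ) : (lucasZ (t+2) : ℝ) = (lucasZ (t+1) : ℝ) + (lucasZ t : ℝ) := by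
  exact_mod_cast congrArg (Int.cast : ℤ → ℝ) (lucasZ_add_two t)

lemma lucasR2 (t : ℤ) : (lucasZ (t+1) : ℝ) = (lucasZ t : ℝ) + (lucasZ (t-1) : ℝ) := by
  have := lucasZ_add_two (t-1)
  rw [show t-1+2 = t+1 by ring, show t-1+1 = t by ring] at this
  exact_mod_cast congrArg (Int.cast : ℤ → ℝ) this

lemma base1 (t : ℤ) : gg 1 t = rhsF 1 t := by
  unfold gg rhsF
  rw [show (1:ℕ)/2+1 = 1 from rfl, Finset.sum_range_one,
    show ((1:ℕ):ℤ) - 2*((0:ℕ):ℤ) + t = t + 1 by push_cast; ring]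
  norm_num [cc]

lemma base2 (t : ℤ) : gg 2 t = rhsF 2 t := by
  unfold gg rhsF
  rw [show (2:ℕ)/2+1 = 2 from rfl, Finset.sum_range_succ, Finset.sum_range_one,
    show ((2:ℕ):ℤ) - 2*((0:ℕ):ℤ) + t = t + 2 by push_cast; ring,
    show ((2:ℕ):ℤ) - 2*((1:ℕ):ℤ) + t = t by push_cast; ring]
  have hc0 : cc 2 0 = 1 := by norm_num [cc]
  have hc1 : cc 2 1 = -2 := by norm_num [cc]
  rw [hc0, hc1]
  norm_num
  linarith [lucasR1 t, lucasR2 t]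

lemma rhs_rec (n : ℕ) (t : ℤ) : rhsF (n+2) t = - rhsF (n+1) (t+1) - rhsF n t := by
  unfold rhsF
  rw [show t+1+1 = t+2 by ring, show t+1-1 = t by ring]
  have R1 := lucasR1 t
  have R2 := lucasR2 t
  rcases (show n%5 = 0 ∨ n%5 = 1 ∨ n%5 = 2 ∨ n%5 = 3 ∨ n%5 = 4 by omega) with h|h|h|h|h <;>
    · rw [show (n+2)%5 = (n%5+2)%5 by omega, show (n+1)%5 = (n%5+1)%5 by omega, h]
      norm_num
      linarith

lemma mainlem : ∀ n, 1 ≤ n → ∀ t : ℤ, gg n t = rhsF n t := by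
  intro n
  induction n using Nat.strong_induction_on with
  | _ n ih =>
    match n with
    | 0 => intro h; omega
    | 1 => intro _ t; exact base1 t
    | 2 => intro _ t; exact base2 t
    | (m+3) =>
      intro _ t
      show gg (m+1+2) t = rhsF (m+1+2) t
      rw [grec (m+1) (by omega) t, show m+1+1 = m+2 from rfl,
        ih (m+2) (by omega) (by omega) (t+1),
        ih (m+1) (by omega) (by omega) t,
        rhs_rec (m+1) t, show m+1+1 = m+2 from rfl]

theorem stmt10 (n : ℕ) (hn : 0 < n) (t : ℤ) :
    ∑ k ∈ Finset.range (n / 2 + 1),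
        (-1 : ℝ) ^ (n - k) * ((n : ℝ) / ((n : ℝ) - (k : ℝ))) * (Nat.choose (n - k) k : ℝ) *
          (lucasZ ((n : ℤ) - 2 * k + t) : ℝ) =
      if n % 5 = 0 then 2 * (lucasZ t : ℝ)
      else if n % 5 = 1 ∨ n % 5 = 4 then -(lucasZ (t + 1) : ℝ)
      else (lucasZ (t - 1) : ℝ) := by
  exact mainlem n hn t
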